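/- The category FinSet of finite sets, with both e-morphisms and m-morphisms given by injections, distinguished squares given by pushout squares of injections (which are also pullback squares), and c and k both sending an injection A ↪ B to the inclusion of the complement B∖A ↪ B, satisfies the axioms of a CGW-category. -/

import Mathlib

open CategoryTheory

/-- The data of a CGW-category (Campbell–Zakharevich): a double category given by
two classes of morphisms `Em` (e-morphisms, drawn `↠`) and `Mm` (m-morphisms, drawn `↣`)
on a common class of objects, a class of distinguished squares, a common initial object,
the comparison `phi` between e- and m-morphisms (used on isomorphisms), and the
kernel/cokernel assignments `k` and `c`. -/
structure CGWData where
  Obj : Type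
  Em : Obj → Obj → Type
  Mm : Obj → Obj → Type
  idE : ∀ A, Em A A
  compE : ∀ {A B C}, Em A B → Em B C → Em A C
  idM : ∀ A, Mm A A
  compM : ∀ {A B C}, Mm A B → Mm B C → Mm A C
  /-- `Dist top left bottom right` : a distinguished square with m-morphisms
  `top : TL ↣ TR`, `bottom : BL ↣ BR` and e-morphisms `left : TL ↠ BL`,
  `right : TR ↠ BR`. -/
  Dist : ∀ {A B P Q}, Mm A B → Em A P → Mm P Q → Em B Q → Prop
  zero : Obj
  initE : ∀ A, Em zero A
  initM : ∀ A, Mm zero A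
  phi : ∀ {A B}, Em A B → Mm A B
  kObj : ∀ {A B}, Em A B → Obj
  kMor : ∀ {A B} (g : Em A B), Mm (kObj g) B
  cObj : ∀ {A B}, Mm A B → Obj
  cMor : ∀ {A B} (f : Mm A B), Em (cObj f) B

namespace CGWData

variable (C : CGWData)

def IsIsoE {A B : C.Obj} (f : C.Em A B) : Prop :=
  ∃ g : C.Em B A, C.compE f g = C.idE A ∧ C.compE g f = C.idE B

def IsIsoM {A B : C.Obj} (f : C.Mm A B) : Prop :=
  ∃ g : C.Mm B A, C.compM f g = C.idM A ∧ C.compM g f = C.idM B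

/-- The axioms of a CGW-category, on top of the data of a `CGWData`:
(Z) `zero` is initial in both `Em` and `Mm`; (I) isomorphism squares are distinguished;
(M) all e- and m-morphisms are monic; (K) kernels/cokernels fit into distinguished
squares over the initial object, unique up to unique isomorphism, `c` and `k` are
mutually inverse equivalences (encoded by equifiberedness/equicofiberedness of
distinguished squares, fullness on triangles, and `c`,`k` being mutually inverse on
objects); (A) existence of "sum" squares. -/
structure IsCGW : Prop where
  idE_comp : ∀ {A B : C.Obj} (f : C.Em A B), C.compE (C.idE A) f = f
  compE_id : ∀ {A B : C.Obj} (f : C.Em A B), C.compE f (C.idE B) = f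
  assocE : ∀ {A B D E : C.Obj} (f : C.Em A B) (g : C.Em B D) (h : C.Em D E),
    C.compE (C.compE f g) h = C.compE f (C.compE g h)
  idM_comp : ∀ {A B : C.Obj} (f : C.Mm A B), C.compM (C.idM A) f = f
  compM_id : ∀ {A B : C.Obj} (f : C.Mm A B), C.compM f (C.idM B) = f
  assocM : ∀ {A B D E : C.Obj} (f : C.Mm A B) (g : C.Mm B D) (h : C.Mm D E),
    C.compM (C.compM f g) h = C.compM f (C.compM g h)
  initE_unique : ∀ {A : C.Obj} (f : C.Em C.zero A), f = C.initE A
  initM_unique : ∀ {A : C.Obj} (f : C.Mm C.zero A), f = C.initM A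
  monoE : ∀ {Z A B : C.Obj} (f : C.Em A B) (u v : C.Em Z A),
    C.compE u f = C.compE v f → u = v
  monoM : ∀ {Z A B : C.Obj} (f : C.Mm A B) (u v : C.Mm Z A),
    C.compM u f = C.compM v f → u = v
  phi_iso : ∀ {A B : C.Obj} (f : C.Em A B), C.IsIsoE f → C.IsIsoM (C.phi f)
  dist_isoSq₁ : ∀ {A B : C.Obj} (f : C.Em A B), C.IsIsoE f →
    C.Dist (C.phi f) f (C.idM B) (C.idE B)
  dist_isoSq₂ : ∀ {A B : C.Obj} (f : C.Em A B), C.IsIsoE f →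
    C.Dist (C.idM A) (C.idE A) (C.phi f) f
  dist_horiz : ∀ {A B P Q B₂ Q₂ : C.Obj} {f : C.Mm A B} {g : C.Em A P} {f' : C.Mm P Q}
    {g' : C.Em B Q} {f₂ : C.Mm B B₂} {f₂' : C.Mm Q Q₂} {g₂ : C.Em B₂ Q₂},
    C.Dist f g f' g' → C.Dist f₂ g' f₂' g₂ →
      C.Dist (C.compM f f₂) g (C.compM f' f₂') g₂
  dist_vert : ∀ {A B P Q P₂ Q₂ : C.Obj} {f : C.Mm A B} {g : C.Em A P} {f' : C.Mm P Q}
    {g' : C.Em B Q} {g₂ : C.Em P P₂} {f₂ : C.Mm P₂ Q₂} {g₂' : C.Em Q Q₂},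
    C.Dist f g f' g' → C.Dist f' g₂ f₂ g₂' →
      C.Dist f (C.compE g g₂) f₂ (C.compE g' g₂')
  kDist : ∀ {A B : C.Obj} (g : C.Em A B),
    C.Dist (C.initM A) (C.initE (C.kObj g)) (C.kMor g) g
  cDist : ∀ {A B : C.Obj} (f : C.Mm A B),
    C.Dist (C.initM (C.cObj f)) (C.initE A) f (C.cMor f)
  k_unique : ∀ {A B K : C.Obj} (g : C.Em A B) (m : C.Mm K B),
    C.Dist (C.initM A) (C.initE K) m g →
      ∃! φ : C.Mm K (C.kObj g), C.IsIsoM φ ∧ C.compM φ (C.kMor g) = m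
  c_unique : ∀ {A B K : C.Obj} (f : C.Mm A B) (e : C.Em K B),
    C.Dist (C.initM K) (C.initE A) f e →
      ∃! ψ : C.Em K (C.cObj f), C.IsIsoE ψ ∧ C.compE ψ (C.cMor f) = e
  distKer : ∀ {A B P Q : C.Obj} {f : C.Mm A B} {g : C.Em A P} {f' : C.Mm P Q}
    {g' : C.Em B Q}, C.Dist f g f' g' →
      ∃ φ : C.Mm (C.kObj g) (C.kObj g'), C.IsIsoM φ ∧
        C.compM (C.kMor g) f' = C.compM φ (C.kMor g')
  distCoker : ∀ {A B P Q : C.Obj} {f : C.Mm A B} {g : C.Em A P} {f' : C.Mm P Q}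
    {g' : C.Em B Q}, C.Dist f g f' g' →
      ∃ ψ : C.Em (C.cObj f) (C.cObj f'), C.IsIsoE ψ ∧
        C.compE (C.cMor f) g' = C.compE ψ (C.cMor f')
  c_full : ∀ {A B A₂ B₂ : C.Obj} (f : C.Mm A B) (f₂ : C.Mm A₂ B₂)
    (ι : C.Em (C.cObj f) (C.cObj f₂)) (e : C.Em B B₂), C.IsIsoE ι →
    C.compE (C.cMor f) e = C.compE ι (C.cMor f₂) →
      ∃ eA : C.Em A A₂, C.Dist f eA f₂ e
  k_full : ∀ {A P A₂ P₂ : C.Obj} (g : C.Em A P) (g₂ : C.Em A₂ P₂)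
    (ι : C.Mm (C.kObj g) (C.kObj g₂)) (m : C.Mm P P₂), C.IsIsoM ι →
    C.compM (C.kMor g) m = C.compM ι (C.kMor g₂) →
      ∃ mA : C.Mm A A₂, C.Dist mA g m g₂
  ck : ∀ {A B : C.Obj} (g : C.Em A B),
    ∃ ι : C.Em A (C.cObj (C.kMor g)), C.IsIsoE ι ∧
      C.compE ι (C.cMor (C.kMor g)) = g
  kc : ∀ {A B : C.Obj} (f : C.Mm A B),
    ∃ ι : C.Mm A (C.kObj (C.cMor f)), C.IsIsoM ι ∧
      C.compM ι (C.kMor (C.cMor f)) = f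
  axA : ∀ A B : C.Obj, ∃ (X : C.Obj) (m : C.Mm B X) (e : C.Em A X),
    C.Dist (C.initM A) (C.initE B) m e

end CGWData

/-- The underlying type of a finite set `A : Finset ℕ`. -/
abbrev FinEl (A : Finset ℕ) : Type := {x : ℕ // x ∈ A}

/-- Injections between finite sets. -/
def FinInj (A B : Finset ℕ) : Type := {f : FinEl A → FinEl B // Function.Injective f}

/-- The complement `B ∖ f(A)` of an injection `f : A ↪ B`. -/
def finCompl {A B : Finset ℕ} (f : FinInj A B) : Finset ℕ :=
  B \ (A.attach.image fun a => ((f.1 a : ℕ)))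

/-- The inclusion of the complement `B ∖ f(A) ↪ B`. -/
def finComplIncl {A B : Finset ℕ} (f : FinInj A B) : FinInj (finCompl f) B :=
  ⟨fun x => ⟨x.1, (Finset.mem_sdiff.mp x.2).1⟩, by
    intro a b h
    have h' := congrArg Subtype.val h
    exact Subtype.ext h'⟩


/-- The CGW-category of finite sets: both e-morphisms and m-morphisms are
injections, distinguished squares are the pushout squares of injections (equivalently
pullback squares which are jointly surjective), and `c` and `k` send an injection
`A ↪ B` to the inclusion of the complement `B ∖ A ↪ B`. -/
def finSetCGW : CGWData where
  Obj := Finset ℕ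
  Em := FinInj
  Mm := FinInj
  idE A := ⟨id, fun _ _ h => h⟩
  compE f g := ⟨g.1 ∘ f.1, fun a b h => f.2 (g.2 h)⟩
  idM A := ⟨id, fun _ _ h => h⟩
  compM f g := ⟨g.1 ∘ f.1, fun a b h => f.2 (g.2 h)⟩
  Dist {A B P Q} f g f' g' :=
    (∀ a, f'.1 (g.1 a) = g'.1 (f.1 a)) ∧
    (∀ q, (∃ b, g'.1 b = q) ∨ (∃ p, f'.1 p = q)) ∧
    (∀ b p, g'.1 b = f'.1 p → ∃ a, f.1 a = b ∧ g.1 a = p)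
  zero := (∅ : Finset ℕ)
  initE A := ⟨fun x => absurd x.2 (Finset.notMem_empty x.1),
    fun x => absurd x.2 (Finset.notMem_empty x.1)⟩
  initM A := ⟨fun x => absurd x.2 (Finset.notMem_empty x.1),
    fun x => absurd x.2 (Finset.notMem_empty x.1)⟩
  phi f := f
  kObj g := finCompl g
  kMor g := finComplIncl g
  cObj f := finCompl f
  cMor f := finComplIncl f

namespace FinSetCGWProof

lemma finInj_ext {A B : Finset ℕ} {f g : FinInj A B}
    (h : ∀ x, ((f.1 x : FinEl B) : ℕ) = ((g.1 x : FinEl B) : ℕ)) : f = g :=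
  Subtype.ext (funext fun x => Subtype.ext (h x))

lemma mem_finCompl_iff {A B : Finset ℕ} (f : FinInj A B) (n : ℕ) :
    n ∈ finCompl f ↔ n ∈ B ∧ ∀ a, ((f.1 a : FinEl B) : ℕ) ≠ n := by
  simp [finCompl]

lemma bij_iso {A B : Finset ℕ} (f : FinInj A B) (h : Function.Bijective f.1) :
    finSetCGW.IsIsoE f := by
  obtain ⟨g, hg1, hg2⟩ := Function.bijective_iff_has_inverse.mp h
  exact ⟨⟨g, hg2.injective⟩, Subtype.ext (funext fun x => hg1 x),
    Subtype.ext (funext fun x => hg2 x)⟩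

lemma iso_surj {A B : Finset ℕ} {f : FinInj A B} (h : finSetCGW.IsIsoE f) :
    Function.Surjective f.1 := by
  obtain ⟨g, _, h2⟩ := h
  intro b
  exact ⟨g.1 b, congrFun (congrArg Subtype.val h2) b⟩

lemma dist_swap {A B P Q : Finset ℕ} {f : FinInj A B} {g : FinInj A P} {f' : FinInj P Q}
    {g' : FinInj B Q} (h : finSetCGW.Dist f g f' g') : finSetCGW.Dist g f g' f' := by
  obtain ⟨h1, h2, h3⟩ := h
  exact ⟨fun a => (h1 a).symm, fun q => (h2 q).symm,
    fun b p hq => (h3 p b hq.symm).imp fun a hu => ⟨hu.2, hu.1⟩⟩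

lemma dist_horiz' {A B P Q B₂ Q₂ : Finset ℕ} {f : FinInj A B} {g : FinInj A P}
    {f' : FinInj P Q} {g' : FinInj B Q} {f₂ : FinInj B B₂} {f₂' : FinInj Q Q₂}
    {g₂ : FinInj B₂ Q₂} (h : finSetCGW.Dist f g f' g') (h₂ : finSetCGW.Dist f₂ g' f₂' g₂) :
    finSetCGW.Dist (finSetCGW.compM f f₂) g (finSetCGW.compM f' f₂') g₂ := by
  obtain ⟨h1, h2, h3⟩ := h
  obtain ⟨k1, k2, k3⟩ := h₂
  refine ⟨?_, ?_, ?_⟩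
  · intro a
    show f₂'.1 (f'.1 (g.1 a)) = g₂.1 (f₂.1 (f.1 a))
    rw [h1 a, k1 (f.1 a)]
  · intro q
    rcases k2 q with ⟨b₂, hb⟩ | ⟨q', hq⟩
    · exact Or.inl ⟨b₂, hb⟩
    · rcases h2 q' with ⟨b, hb⟩ | ⟨p, hp⟩
      · refine Or.inl ⟨f₂.1 b, ?_⟩
        rw [← k1 b, hb, hq]
      · exact Or.inr ⟨p, by show f₂'.1 (f'.1 p) = q; rw [hp, hq]⟩
  · intro b₂ p hq
    obtain ⟨b, hb1, hb2⟩ := k3 b₂ (f'.1 p) hq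
    obtain ⟨a, ha1, ha2⟩ := h3 b p hb2
    exact ⟨a, by show f₂.1 (f.1 a) = b₂; rw [ha1, hb1], ha2⟩

lemma zero_unique {A B K : Finset ℕ} (g : FinInj A B) (m : FinInj K B)
    (h : finSetCGW.Dist (finSetCGW.initM A) (finSetCGW.initE K) m g) :
    ∃! φ : FinInj K (finCompl g), finSetCGW.IsIsoM φ ∧
      finSetCGW.compM φ (finComplIncl g) = m := by
  obtain ⟨-, h2, h3⟩ := h
  have disj : ∀ (b : FinEl A) (p : FinEl K), g.1 b ≠ m.1 p := by
    intro b p hbp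
    obtain ⟨a, -⟩ := h3 b p hbp
    exact absurd a.2 (Finset.notMem_empty a.1)
  have memc : ∀ p : FinEl K, ((m.1 p : FinEl B) : ℕ) ∈ finCompl g := by
    intro p
    exact (mem_finCompl_iff g _).mpr ⟨(m.1 p).2, fun a ha => disj a p (Subtype.ext ha)⟩
  refine ⟨⟨fun p => ⟨(m.1 p : FinEl B).1, memc p⟩, ?_⟩, ⟨?_, ?_⟩, ?_⟩
  · intro a b hab
    have h1 := congrArg Subtype.val hab
    exact m.2 (Subtype.ext h1)
  · refine bij_iso _ ⟨Subtype.property _, ?_⟩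
    intro q
    have hqB : (q : ℕ) ∈ B := ((mem_finCompl_iff g _).mp q.2).1
    rcases h2 ⟨q.1, hqB⟩ with ⟨b, hb⟩ | ⟨p, hp⟩
    · exact absurd (congrArg Subtype.val hb) (((mem_finCompl_iff g _).mp q.2).2 b)
    · have h1 := congrArg Subtype.val hp
      exact ⟨p, Subtype.ext h1⟩
  · exact finInj_ext fun p => rfl
  · rintro φ' ⟨-, hc⟩
    refine Subtype.ext (funext fun p => Subtype.ext ?_)
    have h8 := congrFun (congrArg Subtype.val hc) p
    have h9 := congrArg Subtype.val h8
    exact h9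

lemma ker_compare {A B P Q : Finset ℕ} {f : FinInj A B} {g : FinInj A P} {f' : FinInj P Q}
    {g' : FinInj B Q} (h : finSetCGW.Dist f g f' g') :
    ∃ φ : FinInj (finCompl g) (finCompl g'), finSetCGW.IsIsoM φ ∧
      finSetCGW.compM (finComplIncl g) f' = finSetCGW.compM φ (finComplIncl g') := by
  obtain ⟨h1, h2, h3⟩ := h
  have memc : ∀ x : FinEl (finCompl g),
      ((f'.1 ((finComplIncl g).1 x) : FinEl Q) : ℕ) ∈ finCompl g' := by
    intro x
    refine (mem_finCompl_iff g' _).mpr ⟨Subtype.property _, fun b hb => ?_⟩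
    obtain ⟨a, -, ha2⟩ := h3 b ((finComplIncl g).1 x) (Subtype.ext hb)
    exact ((mem_finCompl_iff g _).mp x.2).2 a (congrArg Subtype.val ha2)
  have inj : ∀ a b : FinEl (finCompl g),
      (⟨((f'.1 ((finComplIncl g).1 a) : FinEl Q) : ℕ), memc a⟩ : FinEl (finCompl g')) =
      ⟨((f'.1 ((finComplIncl g).1 b) : FinEl Q) : ℕ), memc b⟩ → a = b := by
    intro a b hab
    have h1 := congrArg Subtype.val hab
    exact (finComplIncl g).2 (f'.2 (Subtype.ext h1))
  refine ⟨⟨fun x => ⟨_, memc x⟩, inj⟩, ?_, ?_⟩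
  · refine bij_iso _ ⟨inj, ?_⟩
    intro q
    have hqQ : (q : ℕ) ∈ Q := ((mem_finCompl_iff g' _).mp q.2).1
    rcases h2 ⟨q.1, hqQ⟩ with ⟨b, hb⟩ | ⟨p, hp⟩
    · exact absurd (congrArg Subtype.val hb) (((mem_finCompl_iff g' _).mp q.2).2 b)
    · have hpmem : (p : ℕ) ∈ finCompl g := by
        refine (mem_finCompl_iff g _).mpr ⟨p.2, fun a ha => ?_⟩
        have : g'.1 (f.1 a) = ⟨q.1, hqQ⟩ := by
          rw [← h1 a, Subtype.ext ha, hp]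
        exact absurd (congrArg Subtype.val this) (((mem_finCompl_iff g' _).mp q.2).2 (f.1 a))
      refine ⟨⟨p.1, hpmem⟩, Subtype.ext ?_⟩
      show ((f'.1 ⟨p.1, p.2⟩ : FinEl Q) : ℕ) = q.1
      exact congrArg Subtype.val hp
  · exact finInj_ext fun x => rfl

lemma full_lemma {A B A₂ B₂ : Finset ℕ} (f : FinInj A B) (f₂ : FinInj A₂ B₂)
    (ι : FinInj (finCompl f) (finCompl f₂)) (e : FinInj B B₂)
    (hι : finSetCGW.IsIsoE ι)
    (hcomm : finSetCGW.compE (finComplIncl f) e = finSetCGW.compE ι (finComplIncl f₂)) :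
    ∃ eA : FinInj A A₂, finSetCGW.Dist f eA f₂ e := by
  have hsurj := iso_surj hι
  have hcw : ∀ x : FinEl (finCompl f),
      e.1 ((finComplIncl f).1 x) = (finComplIncl f₂).1 (ι.1 x) :=
    fun x => congrFun (congrArg Subtype.val hcomm) x
  have claim : ∀ a : FinEl A, ∃ a₂ : FinEl A₂, f₂.1 a₂ = e.1 (f.1 a) := by
    intro a
    by_contra hc
    push_neg at hc
    have hmem : ((e.1 (f.1 a) : FinEl B₂) : ℕ) ∈ finCompl f₂ :=
      (mem_finCompl_iff f₂ _).mpr ⟨Subtype.property _,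
        fun a₂ ha₂ => hc a₂ (Subtype.ext ha₂)⟩
    obtain ⟨x, hx⟩ := hsurj ⟨_, hmem⟩
    have : e.1 ((finComplIncl f).1 x) = e.1 (f.1 a) := by
      rw [hcw x, hx]; exact Subtype.ext rfl
    have hfx : (finComplIncl f).1 x = f.1 a := e.2 this
    exact ((mem_finCompl_iff f _).mp x.2).2 a (congrArg Subtype.val hfx.symm)
  refine ⟨⟨fun a => Classical.choose (claim a), ?_⟩, ?_, ?_, ?_⟩
  · intro a b hab
    have hab' : Classical.choose (claim a) = Classical.choose (claim b) := hab
    have ha := Classical.choose_spec (claim a)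
    have hb := Classical.choose_spec (claim b)
    have : e.1 (f.1 a) = e.1 (f.1 b) := by rw [← ha, ← hb, hab']
    exact f.2 (e.2 this)
  · intro a
    exact Classical.choose_spec (claim a)
  · intro q
    by_cases hq : ∃ p, f₂.1 p = q
    · exact Or.inr hq
    · push_neg at hq
      have hmem : (q : ℕ) ∈ finCompl f₂ :=
        (mem_finCompl_iff f₂ _).mpr ⟨q.2, fun p hp => hq p (Subtype.ext hp)⟩
      obtain ⟨x, hx⟩ := hsurj ⟨q.1, hmem⟩
      refine Or.inl ⟨(finComplIncl f).1 x, ?_⟩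
      refine Subtype.ext ?_
      have h2 := congrArg Subtype.val (hcw x)
      have h3 : ((ι.1 x : FinEl (finCompl f₂)) : ℕ) = q.1 := congrArg Subtype.val hx
      rw [h2]
      exact h3
  · intro b p hq
    have claim2 : ∃ a : FinEl A, f.1 a = b := by
      by_contra hc
      push_neg at hc
      have hmem : (b : ℕ) ∈ finCompl f :=
        (mem_finCompl_iff f _).mpr ⟨b.2, fun a ha => hc a (Subtype.ext ha)⟩
      have hx := hcw ⟨b.1, hmem⟩
      have hbv : (finComplIncl f).1 ⟨b.1, hmem⟩ = b := Subtype.ext rfl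
      rw [hbv, hq] at hx
      have h4 : ((f₂.1 p : FinEl B₂) : ℕ) = ((ι.1 ⟨b.1, hmem⟩ : FinEl (finCompl f₂)) : ℕ) :=
        congrArg Subtype.val hx
      exact ((mem_finCompl_iff f₂ _).mp (ι.1 ⟨b.1, hmem⟩).2).2 p h4
    obtain ⟨a, ha⟩ := claim2
    refine ⟨a, ha, ?_⟩
    have hspec := Classical.choose_spec (claim a)
    refine f₂.2 ?_
    rw [hspec, ha, hq]

lemma ck_lemma {A B : Finset ℕ} (g : FinInj A B) :
    ∃ ι : FinInj A (finCompl (finComplIncl g)), finSetCGW.IsIsoE ι ∧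
      finSetCGW.compE ι (finComplIncl (finComplIncl g)) = g := by
  have memc : ∀ a : FinEl A, ((g.1 a : FinEl B) : ℕ) ∈ finCompl (finComplIncl g) := by
    intro a
    refine (mem_finCompl_iff (finComplIncl g) _).mpr ⟨(g.1 a).2, fun x hx => ?_⟩
    have h5 : ((g.1 a : FinEl B) : ℕ) = (x : ℕ) := hx.symm
    exact ((mem_finCompl_iff g _).mp x.2).2 a h5
  have inj : ∀ a b : FinEl A,
      (⟨((g.1 a : FinEl B) : ℕ), memc a⟩ : FinEl (finCompl (finComplIncl g))) =
      ⟨((g.1 b : FinEl B) : ℕ), memc b⟩ → a = b := by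
    intro a b hab
    have h1 := congrArg Subtype.val hab
    exact g.2 (Subtype.ext h1)
  refine ⟨⟨fun a => ⟨_, memc a⟩, inj⟩, ?_, ?_⟩
  · refine bij_iso _ ⟨inj, ?_⟩
    intro q
    have hq := (mem_finCompl_iff (finComplIncl g) _).mp q.2
    have hqg : (q : ℕ) ∉ finCompl g := by
      intro hmem
      exact hq.2 ⟨q.1, hmem⟩ rfl
    have : ∃ a : FinEl A, ((g.1 a : FinEl B) : ℕ) = q.1 := by
      by_contra hc
      push_neg at hc
      exact hqg ((mem_finCompl_iff g _).mpr ⟨hq.1, hc⟩)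
    obtain ⟨a, ha⟩ := this
    exact ⟨a, Subtype.ext ha⟩
  · exact finInj_ext fun a => rfl

end FinSetCGWProof

/-- The category `FinSet` of finite sets, with both e-morphisms and m-morphisms given
by injections, distinguished squares given by pushout squares of injections (which
are also pullback squares; encoded as commuting, jointly surjective pullback
squares), and `c` and `k` both sending an injection `A ↪ B` to the inclusion of the
complement `B ∖ A ↪ B`, satisfies the axioms of a CGW-category. -/
theorem finSetCGW_isCGW : finSetCGW.IsCGW := by
  have kdist : ∀ {A B : Finset ℕ} (g : FinInj A B),
      finSetCGW.Dist (finSetCGW.initM A) (finSetCGW.initE (finCompl g)) (finComplIncl g) g := by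
    intro A B g
    refine ⟨fun a => absurd a.2 (Finset.notMem_empty a.1), ?_, ?_⟩
    · intro q
      by_cases hq : ∃ b, g.1 b = q
      · exact Or.inl hq
      · push_neg at hq
        have hmem : (q : ℕ) ∈ finCompl g :=
          (FinSetCGWProof.mem_finCompl_iff g _).mpr ⟨q.2, fun a ha => hq a (Subtype.ext ha)⟩
        exact Or.inr ⟨⟨q.1, hmem⟩, Subtype.ext rfl⟩
    · intro b p hq
      exact absurd (congrArg Subtype.val hq)
        (((FinSetCGWProof.mem_finCompl_iff g _).mp p.2).2 b)
  have axA : ∀ A B : Finset ℕ, ∃ (X : Finset ℕ) (m : FinInj B X) (e : FinInj A X),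
      finSetCGW.Dist (finSetCGW.initM A) (finSetCGW.initE B) m e := by
    intro A B
    refine ⟨A.image (fun n => 2*n) ∪ B.image (fun n => 2*n+1),
      ⟨fun b => ⟨2*b.1+1, ?_⟩, ?_⟩, ⟨fun a => ⟨2*a.1, ?_⟩, ?_⟩,
      fun a => absurd a.2 (Finset.notMem_empty a.1), ?_, ?_⟩
    · exact Finset.mem_union_right _ (Finset.mem_image.mpr ⟨b.1, b.2, rfl⟩)
    · intro x y h
      have h1 : 2*(x:ℕ)+1 = 2*(y:ℕ)+1 := congrArg Subtype.val h
      exact Subtype.ext (by omega)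
    · exact Finset.mem_union_left _ (Finset.mem_image.mpr ⟨a.1, a.2, rfl⟩)
    · intro x y h
      have h1 : 2*(x:ℕ) = 2*(y:ℕ) := congrArg Subtype.val h
      exact Subtype.ext (by omega)
    · intro q
      rcases Finset.mem_union.mp q.2 with hq | hq
      · obtain ⟨a, ha, hav⟩ := Finset.mem_image.mp hq
        exact Or.inl ⟨⟨a, ha⟩, Subtype.ext hav⟩
      · obtain ⟨b, hb, hbv⟩ := Finset.mem_image.mp hq
        exact Or.inr ⟨⟨b, hb⟩, Subtype.ext hbv⟩
    · intro b p hq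
      have h1 : 2*(b:ℕ) = 2*(p:ℕ)+1 := congrArg Subtype.val hq
      omega
  refine
  { idE_comp := fun f => rfl
    compE_id := fun f => rfl
    assocE := fun f g h => rfl
    idM_comp := fun f => rfl
    compM_id := fun f => rfl
    assocM := fun f g h => rfl
    initE_unique := fun f =>
      Subtype.ext (funext fun x => absurd x.2 (Finset.notMem_empty x.1))
    initM_unique := fun f =>
      Subtype.ext (funext fun x => absurd x.2 (Finset.notMem_empty x.1))
    monoE := fun f u v h => FinSetCGWProof.finInj_ext fun x =>
      congrArg Subtype.val (f.2 (congrFun (congrArg Subtype.val h) x))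
    monoM := fun f u v h => FinSetCGWProof.finInj_ext fun x =>
      congrArg Subtype.val (f.2 (congrFun (congrArg Subtype.val h) x))
    phi_iso := fun f h => h
    dist_isoSq₁ := fun f hf =>
      ⟨fun a => rfl, fun q => Or.inl ⟨q, rfl⟩, fun b p hq => by
        obtain ⟨a, ha⟩ := FinSetCGWProof.iso_surj hf b
        exact ⟨a, ha, ha.trans hq⟩⟩
    dist_isoSq₂ := fun f hf =>
      ⟨fun a => rfl, fun q => Or.inl (FinSetCGWProof.iso_surj hf q),
        fun b p hq => ⟨b, rfl, f.2 hq⟩⟩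
    dist_horiz := fun h h₂ => FinSetCGWProof.dist_horiz' h h₂
    dist_vert := fun h h₂ => FinSetCGWProof.dist_swap
      (FinSetCGWProof.dist_horiz' (FinSetCGWProof.dist_swap h) (FinSetCGWProof.dist_swap h₂))
    kDist := fun g => kdist g
    cDist := fun f => FinSetCGWProof.dist_swap (kdist f)
    k_unique := fun g m h => FinSetCGWProof.zero_unique g m h
    c_unique := fun f e h => FinSetCGWProof.zero_unique f e (FinSetCGWProof.dist_swap h)
    distKer := fun h => FinSetCGWProof.ker_compare h
    distCoker := fun h => FinSetCGWProof.ker_compare (FinSetCGWProof.dist_swap h)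
    c_full := fun f f₂ ι e hι hc => FinSetCGWProof.full_lemma f f₂ ι e hι hc
    k_full := fun g g₂ ι m hι hc => by
      obtain ⟨mA, hd⟩ := FinSetCGWProof.full_lemma g g₂ ι m hι hc
      exact ⟨mA, FinSetCGWProof.dist_swap hd⟩
    ck := fun g => FinSetCGWProof.ck_lemma g
    kc := fun f => FinSetCGWProof.ck_lemma f
    axA := axA }
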